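/- Let M be a locally right Garside monoid, x ∈ M, and X a nonempty subset of the set of right divisors of x that is closed under left lcm (i.e., any two elements of X have a left lcm in M, and it lies in X). Then X has a greatest element with respect to right divisibility, i.e., there exists x₁ ∈ X such that every element of X is a right divisor of x₁. -/
import Mathlib


/-- `y` right-divides `x`, i.e. `x` is a left multiple of `y`. -/
def RDiv {M : Type*} [Monoid M] (x y : M) : Prop := ∃ z, x = z * y

/-- `z` is a left lcm of `a` and `b`: it is a common left multiple of `a` and `b`, and
every common left multiple of `a` and `b` is a left multiple of `z`. -/
def IsLeftLcm {M : Type*} [Monoid M] (z a b : M) : Prop :=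
  RDiv z a ∧ RDiv z b ∧ ∀ w, RDiv w a → RDiv w b → RDiv w z

/-- A monoid is locally right Garside if it is right cancellative, any two elements
admitting a common left multiple admit a left lcm, and, for every `x`, there is no
infinite strictly increasing chain of right divisors of `x`. -/
structure LocallyRightGarside (M : Type*) [Monoid M] : Prop where
  rightCancel : ∀ x y z : M, x * z = y * z → x = y
  lcm : ∀ a b : M, (∃ w, RDiv w a ∧ RDiv w b) → ∃ z, IsLeftLcm z a b
  noChain : ∀ x : M, ¬ ∃ f : ℕ → M,
      (∀ k, RDiv x (f k)) ∧ (∀ k, ∃ w, w ≠ 1 ∧ f (k + 1) = w * f k)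

/-- `t` is the `A`-tail of `x`: a right divisor of `x` lying in `A` which is maximal
with respect to right divisibility. -/
def IsTail {M : Type*} [Monoid M] (A : Set M) (x t : M) : Prop :=
  t ∈ A ∧ RDiv x t ∧ ∀ a ∈ A, RDiv x a → RDiv t a

/-- A submonoid is closed if it is closed under left lcm and under left divisor. -/
def ClosedSubmonoid {M : Type*} [Monoid M] (M₁ : Submonoid M) : Prop :=
  (∀ a ∈ M₁, ∀ b ∈ M₁, ∀ z : M, IsLeftLcm z a b → z ∈ M₁) ∧
  (∀ a ∈ M₁, ∀ y z : M, a = y * z → y ∈ M₁)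

/-- In a locally right Garside monoid, a nonempty subset `X` of the right
divisors of `x` that is closed under left lcm admits a greatest element with respect
to right divisibility. -/
theorem exists_greatest_of_closed_subset_of_rightDivisors {M : Type*} [Monoid M]
    (h : LocallyRightGarside M) (x : M) (X : Set M) (hne : X.Nonempty)
    (hdiv : ∀ a ∈ X, RDiv x a)
    (hclosed : ∀ a ∈ X, ∀ b ∈ X, ∃ z ∈ X, IsLeftLcm z a b) :
    ∃ x₁ ∈ X, ∀ a ∈ X, RDiv x₁ a := by
  by_contra hcon
  push_neg at hcon
  have step : ∀ t ∈ X, ∃ z ∈ X, ∃ w, w ≠ 1 ∧ z = w * t := by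
    intro t ht
    obtain ⟨a, ha, hna⟩ := hcon t ht
    obtain ⟨z, hz, ⟨w, hw⟩, hza, _⟩ := hclosed t ht a ha
    refine ⟨z, hz, w, ?_, hw⟩
    rintro rfl
    rw [one_mul] at hw
    exact hna (hw ▸ hza)
  choose g hgX wit hwne heq using step
  obtain ⟨t0, ht0⟩ := hne
  let f : ℕ → {t : M // t ∈ X} :=
    fun n => Nat.rec ⟨t0, ht0⟩ (fun _ p => ⟨g p.1 p.2, hgX p.1 p.2⟩) n
  exact h.noChain x ⟨fun n => (f n).1, fun k => hdiv _ (f k).2,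
    fun k => ⟨wit (f k).1 (f k).2, hwne _ _, heq _ _⟩⟩
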